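/- Let S be a right pseudo-finite monoid such that Green's preorder ≤_L is left compatible with multiplication (u ≤_L v implies au ≤_L av for all a). Then S has a minimal ideal which is the union of finitely many minimal left ideals. -/

import Mathlib

def seqN {α : Type*} (r : α → α → Prop) : ℕ → α → α → Prop
  | 0, a, b => a = b
  | n + 1, a, b => ∃ c, r a c ∧ seqN r n c b

/-- One step of an `X`-sequence in a monoid `S` as a right `S`-act:
`a = x * s`, `b = y * s` with `x, y ∈ X`, `s ∈ S`. -/
def mStep {S : Type*} [Monoid S] (X : Set S) (a b : S) : Prop :=
  ∃ x ∈ X, ∃ y ∈ X, ∃ s : S, a = x * s ∧ b = y * s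

/-- A monoid is right pseudo-finite if some finite `X ⊆ S` and bound `N` connect any
two elements by an `X`-sequence of length at most `N`. -/
def MRightPF (S : Type*) [Monoid S] : Prop :=
  ∃ X : Finset S, ∃ N : ℕ, ∀ a b : S, ∃ n ≤ N, seqN (mStep (X : Set S)) n a b

/-- `L` is a left ideal of `S`. -/
def IsLeftIdeal {S : Type*} [Monoid S] (L : Set S) : Prop :=
  L.Nonempty ∧ ∀ a ∈ L, ∀ s : S, s * a ∈ L

/-- `R` is a right ideal of `S`. -/
def IsRightIdeal {S : Type*} [Monoid S] (R : Set S) : Prop :=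
  R.Nonempty ∧ ∀ a ∈ R, ∀ s : S, a * s ∈ R

/-- `I` is a two-sided ideal of `S`. -/
def IsIdeal {S : Type*} [Monoid S] (I : Set S) : Prop :=
  I.Nonempty ∧ ∀ a ∈ I, ∀ s : S, s * a ∈ I ∧ a * s ∈ I

/-- `L` is a minimal left ideal: a left ideal containing no proper left ideal. -/
def IsMinLeftIdeal {S : Type*} [Monoid S] (L : Set S) : Prop :=
  IsLeftIdeal L ∧ ∀ L' ⊆ L, IsLeftIdeal L' → L' = L

/-- `R` is a minimal right ideal: a right ideal containing no proper right ideal. -/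
def IsMinRightIdeal {S : Type*} [Monoid S] (R : Set S) : Prop :=
  IsRightIdeal R ∧ ∀ R' ⊆ R, IsRightIdeal R' → R' = R

/-- `K` is the minimal ideal of `S`: an ideal contained in every ideal. -/
def IsMinIdeal {S : Type*} [Monoid S] (K : Set S) : Prop :=
  IsIdeal K ∧ ∀ I : Set S, IsIdeal I → K ⊆ I

section AuxPF

variable {S : Type*} [Monoid S]

/-- The principal left ideal `S w`. -/
def pIdeal (w : S) : Set S := {t | ∃ s : S, t = s * w}

lemma mem_pIdeal_self (w : S) : w ∈ pIdeal w := ⟨1, (one_mul w).symm⟩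

lemma isLeftIdeal_pIdeal (w : S) : IsLeftIdeal (pIdeal w) := by
  refine ⟨⟨w, mem_pIdeal_self w⟩, ?_⟩
  rintro a ⟨s, rfl⟩ t
  exact ⟨t * s, (mul_assoc t s w).symm⟩

lemma pIdeal_subset {L : Set S} (hL : IsLeftIdeal L) {a : S} (ha : a ∈ L) :
    pIdeal a ⊆ L := by
  rintro t ⟨s, rfl⟩
  exact hL.2 a ha s

lemma pf_key_lemma (X : Set S)
    (hcomp : ∀ u v a : S, (∃ s : S, u = s * v) → ∃ s : S, a * u = s * (a * v)) :
    ∀ (n : ℕ) (a b w : S), seqN (mStep X) n a b → (∃ s : S, w = s * a) →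
      ∃ l : List S, l.length ≤ n ∧ (∀ x ∈ l, x ∈ X) ∧ ∃ t : S, l.prod * w = t * b := by
  intro n
  induction n with
  | zero =>
    rintro a b w hab ⟨s, rfl⟩
    have hab' : a = b := hab
    exact ⟨[], Nat.le_refl 0, by simp, s, by rw [hab', List.prod_nil, one_mul]⟩
  | succ n ih =>
    rintro a b w hab hw
    obtain ⟨c, ⟨x, hx, y, hy, s, rfl, rfl⟩, hseq⟩ :
        ∃ c, mStep X a c ∧ seqN (mStep X) n c b := hab
    obtain ⟨u, rfl⟩ := hw
    have h1 : ∃ t : S, u * (x * s) = t * s := ⟨u * x, (mul_assoc u x s).symm⟩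
    obtain ⟨t0, ht0⟩ := hcomp (u * (x * s)) s y h1
    obtain ⟨l, hlen, hmem, t, hprod⟩ := ih (y * s) b (y * (u * (x * s))) hseq ⟨t0, ht0⟩
    refine ⟨l ++ [y], ?_, ?_, t, ?_⟩
    · simpa using Nat.succ_le_succ hlen
    · intro z hz
      rcases List.mem_append.1 hz with h | h
      · exact hmem z h
      · rw [List.mem_singleton.1 h]; exact hy
    · rw [List.prod_append, List.prod_singleton, mul_assoc, hprod]

end AuxPF

/-- If `S` is a right pseudo-finite monoid in which Green's preorder `≤_L` is left
compatible with multiplication, then `S` has a minimal ideal which is the union of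
finitely many minimal left ideals. -/
theorem min_ideal_of_rightPF_leL_left_compatible {S : Type*} [Monoid S]
    (hpf : MRightPF S)
    (hcomp : ∀ u v a : S, (∃ s : S, u = s * v) → ∃ s : S, a * u = s * (a * v)) :
    ∃ K : Set S, IsMinIdeal K ∧
      ∃ (n : ℕ) (L : Fin n → Set S),
        (∀ i, IsMinLeftIdeal (L i)) ∧ K = ⋃ i, L i := by
  classical
  obtain ⟨X, N, hXN⟩ := hpf
  -- the finite set of products of at most `N` elements of `X`
  set W : Set S := {w | ∃ l : List S, l.length ≤ N ∧ (∀ x ∈ l, x ∈ (X : Set S)) ∧ l.prod = w}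
    with hW
  -- every principal left ideal contains an element of `W`
  have key : ∀ b : S, ∃ w ∈ W, w ∈ pIdeal b := by
    intro b
    obtain ⟨n, hn, hseq⟩ := hXN 1 b
    obtain ⟨l, hlen, hmem, t, hprod⟩ :=
      pf_key_lemma (X : Set S) hcomp n 1 b 1 hseq ⟨1, (one_mul 1).symm⟩
    exact ⟨l.prod, ⟨l, hlen.trans hn, hmem, rfl⟩, t, by rw [← hprod, mul_one]⟩
  -- `W` is finite
  have hWfin : W.Finite := by
    have hsub : W ⊆ (fun l : List {x // x ∈ X} => (l.map Subtype.val).prod) ''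
        {l : List {x // x ∈ X} | l.length ≤ N} := by
      rintro w ⟨l, hlen, hmem, rfl⟩
      refine ⟨l.attach.map (fun x => ⟨x.1, hmem x.1 x.2⟩), by simpa using hlen, ?_⟩
      simp only [List.map_map]
      have : l.attach.map ((Subtype.val : {x // x ∈ X} → S) ∘
          (fun x : {y // y ∈ l} => (⟨x.1, hmem x.1 x.2⟩ : {x // x ∈ X}))) = l := by
        simp [List.attach_map_val]
      rw [this]
    exact ((List.finite_length_le _ N).image _).subset hsub
  -- existence of a minimal left ideal
  have exists_min : ∃ L : Set S, IsMinLeftIdeal L := by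
    have h𝒮fin : (pIdeal '' W).Finite := hWfin.image _
    have h𝒮ne : (pIdeal '' W).Nonempty := by
      obtain ⟨w, hw, _⟩ := key 1
      exact ⟨pIdeal w, w, hw, rfl⟩
    obtain ⟨M₀, hM₀, hmin⟩ : ∃ M ∈ pIdeal '' W, ∀ M' ∈ pIdeal '' W, M' ≤ M → M = M' := by
      obtain ⟨M, hM⟩ := h𝒮fin.exists_minimal h𝒮ne
      exact ⟨M, hM.prop, fun M' h h' => (hM.eq_of_le h h').symm⟩
    refine ⟨M₀, ?_, ?_⟩
    · obtain ⟨w₀, _, rfl⟩ := hM₀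
      exact isLeftIdeal_pIdeal w₀
    · intro L' hsub hL'
      obtain ⟨b, hb⟩ := hL'.1
      obtain ⟨w, hwW, hwb⟩ := key b
      have hwL' : w ∈ L' := pIdeal_subset hL' hb hwb
      have h1 : pIdeal w ⊆ L' := pIdeal_subset hL' hwL'
      have h2 : M₀ = pIdeal w := hmin (pIdeal w) ⟨w, hwW, rfl⟩ (h1.trans hsub)
      exact Set.Subset.antisymm hsub (h2 ▸ h1)
  -- every minimal left ideal is a principal left ideal generated by an element of `W`
  have min_eq : ∀ L : Set S, IsMinLeftIdeal L → ∃ w ∈ W, L = pIdeal w := by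
    intro L hL
    obtain ⟨b, hb⟩ := hL.1.1
    obtain ⟨w, hwW, hwb⟩ := key b
    have hwL : w ∈ L := pIdeal_subset hL.1 hb hwb
    exact ⟨w, hwW, (hL.2 (pIdeal w) (pIdeal_subset hL.1 hwL) (isLeftIdeal_pIdeal w)).symm⟩
  -- minimal left ideals are stable under right translation
  have right_stable : ∀ L : Set S, IsMinLeftIdeal L → ∀ a ∈ L, ∀ s : S,
      IsMinLeftIdeal (pIdeal (a * s)) := by
    intro L hL a ha s
    refine ⟨isLeftIdeal_pIdeal _, ?_⟩
    intro L' hsub hL'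
    obtain ⟨b, hb⟩ := hL'.1
    obtain ⟨t, hbt⟩ := hsub hb
    have hta : t * a ∈ L := hL.1.2 a ha t
    have hLeq : pIdeal (t * a) = L := hL.2 _ (pIdeal_subset hL.1 hta) (isLeftIdeal_pIdeal _)
    have haL : a ∈ pIdeal (t * a) := hLeq ▸ ha
    obtain ⟨u, hu⟩ := haL
    have has : a * s = u * b := by
      rw [hbt]
      conv_lhs => rw [hu]
      rw [mul_assoc, mul_assoc]
    have hasL' : a * s ∈ L' := has ▸ hL'.2 b hb u
    exact Set.Subset.antisymm hsub (pIdeal_subset hL' hasL')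
  -- the set of all minimal left ideals
  set ℳ : Set (Set S) := {L | IsMinLeftIdeal L} with hℳ
  have hℳfin : ℳ.Finite := by
    refine (hWfin.image pIdeal).subset ?_
    intro L hL
    obtain ⟨w, hw, he⟩ := min_eq L hL
    exact ⟨w, hw, he.symm⟩
  have hℳne : ℳ.Nonempty := exists_min
  -- `K` is the union of all minimal left ideals
  refine ⟨⋃₀ ℳ, ⟨⟨?_, ?_⟩, ?_⟩, ?_⟩
  · obtain ⟨L, hL⟩ := hℳne
    obtain ⟨b, hb⟩ := hL.1.1
    exact ⟨b, L, hL, hb⟩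
  · rintro a ⟨L, hL, haL⟩ s
    constructor
    · exact ⟨L, hL, hL.1.2 a haL s⟩
    · exact ⟨pIdeal (a * s), right_stable L hL a haL s, mem_pIdeal_self _⟩
  · rintro I hI a ⟨L, hL, haL⟩
    obtain ⟨i, hi⟩ := hI.1
    have hint : IsLeftIdeal (L ∩ I) := by
      refine ⟨⟨i * a, hL.1.2 a haL i, (hI.2 i hi a).2⟩, ?_⟩
      rintro c ⟨hcL, hcI⟩ s
      exact ⟨hL.1.2 c hcL s, (hI.2 c hcI s).1⟩
    have heq : L ∩ I = L := hL.2 (L ∩ I) Set.inter_subset_left hint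
    have : a ∈ L ∩ I := by rw [heq]; exact haL
    exact this.2
  · -- indexing by `Fin n`
    refine ⟨hℳfin.toFinset.card, fun i => (hℳfin.toFinset.equivFin.symm i : Set S), ?_, ?_⟩
    · intro i
      have := (hℳfin.toFinset.equivFin.symm i).2
      rw [Set.Finite.mem_toFinset] at this
      exact this
    · ext x
      simp only [Set.mem_sUnion, Set.mem_iUnion]
      constructor
      · rintro ⟨L, hL, hx⟩
        have hLt : L ∈ hℳfin.toFinset := (Set.Finite.mem_toFinset _).2 hL
        refine ⟨hℳfin.toFinset.equivFin ⟨L, hLt⟩, ?_⟩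
        rw [Equiv.symm_apply_apply]
        exact hx
      · rintro ⟨i, hx⟩
        refine ⟨_, ?_, hx⟩
        have := (hℳfin.toFinset.equivFin.symm i).2
        rw [Set.Finite.mem_toFinset] at this
        exact this
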